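/- arXiv:1703.06542 — 2 statements merged into one kernel-verified Lean document; each statement's English description precedes it below -/
import Mathlib

section
/- Let H = ℂ^{d₁} ⊗ ⋯ ⊗ ℂ^{d_N}, and for each i ∈ {1, …, K} (K ≥ 2) let P⁽ⁱ⁾ = {ψ_j⁽ⁱ⁾ : 1 ≤ j ≤ n⁽ⁱ⁾} be an unextendible product basis of H. Then the set P = {ψ_j⁽ⁱ⁾ ⊗ e_{i} : 1 ≤ i ≤ K, 1 ≤ j ≤ n⁽ⁱ⁾}, where {e_i} is the standard orthonormal basis of ℂ^K, is an unextendible product basis of H ⊗ ℂ^K. -/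
open scoped Classical

/-- The fully product vector of `ℂ^{d₁} ⊗ ⋯ ⊗ ℂ^{d_N}` (modelled as
`EuclideanSpace ℂ (Π i, Fin (d i))`) with local factors `φ i`. -/
noncomputable def prodVec {N : ℕ} {d : Fin N → ℕ} (φ : ∀ i, Fin (d i) → ℂ) :
    EuclideanSpace ℂ (∀ i, Fin (d i)) :=
  WithLp.toLp 2 (fun x => ∏ i, φ i (x i))

/-- An unextendible product basis of the multipartite space
`ℂ^{d₁} ⊗ ⋯ ⊗ ℂ^{d_N}`: pairwise orthonormal fully product vectors, fewer than
`d₁⋯d_N` of them, with no nonzero fully product vector orthogonal to all. -/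
def IsUPB {N : ℕ} {d : Fin N → ℕ} (S : Finset (EuclideanSpace ℂ (∀ i, Fin (d i)))) : Prop :=
  (∀ ψ ∈ S, ∃ φ, ψ = prodVec φ) ∧
  (∀ ψ ∈ S, ∀ χ ∈ S, (inner ℂ ψ χ : ℂ) = if ψ = χ then 1 else 0) ∧
  S.card < ∏ i, d i ∧
  ∀ φ : ∀ i, Fin (d i) → ℂ, prodVec φ ≠ 0 →
    ¬ (∀ ψ ∈ S, (inner ℂ ψ (prodVec φ) : ℂ) = 0)

/-- The fully product vector of `(ℂ^{d₁} ⊗ ⋯ ⊗ ℂ^{d_N}) ⊗ ℂ^K`. -/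
noncomputable def prodVecExt {N K : ℕ} {d : Fin N → ℕ}
    (φ : ∀ i, Fin (d i) → ℂ) (χ : Fin K → ℂ) :
    EuclideanSpace ℂ ((∀ i, Fin (d i)) × Fin K) :=
  WithLp.toLp 2 (fun p => (∏ i, φ i (p.1 i)) * χ p.2)

/-- An unextendible product basis of `(ℂ^{d₁} ⊗ ⋯ ⊗ ℂ^{d_N}) ⊗ ℂ^K`. -/
def IsUPBExt {N K : ℕ} {d : Fin N → ℕ}
    (S : Finset (EuclideanSpace ℂ ((∀ i, Fin (d i)) × Fin K))) : Prop :=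
  (∀ ψ ∈ S, ∃ φ χ, ψ = prodVecExt φ χ) ∧
  (∀ ψ ∈ S, ∀ χ ∈ S, (inner ℂ ψ χ : ℂ) = if ψ = χ then 1 else 0) ∧
  S.card < (∏ i, d i) * K ∧
  ∀ (φ : ∀ i, Fin (d i) → ℂ) (χ : Fin K → ℂ), prodVecExt φ χ ≠ 0 →
    ¬ (∀ ψ ∈ S, (inner ℂ ψ (prodVecExt φ χ) : ℂ) = 0)

/-- The map `ψ ↦ ψ ⊗ e_i` into `(ℂ^{d₁} ⊗ ⋯ ⊗ ℂ^{d_N}) ⊗ ℂ^K`. -/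
noncomputable def tensorBasisVec {N K : ℕ} {d : Fin N → ℕ} (i : Fin K)
    (ψ : EuclideanSpace ℂ (∀ i, Fin (d i))) :
    EuclideanSpace ℂ ((∀ i, Fin (d i)) × Fin K) :=
  WithLp.toLp 2 (fun p => ψ p.1 * (if p.2 = i then 1 else 0))

lemma inner_tbv {N K : ℕ} {d : Fin N → ℕ} (i i' : Fin K)
    (a b : EuclideanSpace ℂ (∀ i, Fin (d i))) :
    (inner ℂ (tensorBasisVec i a) (tensorBasisVec i' b) : ℂ) =
      (if i = i' then 1 else 0) * inner ℂ a b := by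
  simp only [PiLp.inner_apply, RCLike.inner_apply, tensorBasisVec,
    Fintype.sum_prod_type, map_mul, Finset.mul_sum]
  refine Finset.sum_congr rfl fun x _ => ?_
  by_cases h : i = i' <;>
    simp [h, Finset.sum_ite_eq', mul_comm, mul_assoc, mul_left_comm, apply_ite, Finset.sum_ite_eq]

lemma inner_tbv_ext {N K : ℕ} {d : Fin N → ℕ} (i : Fin K)
    (a : EuclideanSpace ℂ (∀ i, Fin (d i)))
    (φ : ∀ i, Fin (d i) → ℂ) (χ : Fin K → ℂ) :
    (inner ℂ (tensorBasisVec i a) (prodVecExt φ χ) : ℂ) =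
      χ i * inner ℂ a (prodVec φ) := by
  simp only [PiLp.inner_apply, RCLike.inner_apply, tensorBasisVec, prodVecExt, prodVec,
    Fintype.sum_prod_type, map_mul, Finset.mul_sum]
  refine Finset.sum_congr rfl fun x _ => ?_
  simp [apply_ite, Finset.sum_ite_eq', mul_comm, mul_assoc, mul_left_comm]

/-- If `P⁽ⁱ⁾` is a UPB of `H = ℂ^{d₁} ⊗ ⋯ ⊗ ℂ^{d_N}` for each `i ∈ Fin K`
(`K ≥ 2`), then `{ψ ⊗ e_i : ψ ∈ P⁽ⁱ⁾}` is a UPB of `H ⊗ ℂ^K`. -/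
theorem upb_of_family_of_upbs {N K : ℕ} {d : Fin N → ℕ} (hK : 2 ≤ K)
    (P : Fin K → Finset (EuclideanSpace ℂ (∀ i, Fin (d i))))
    (hP : ∀ i, IsUPB (P i)) :
    IsUPBExt (Finset.univ.biUnion fun i : Fin K => (P i).image (tensorBasisVec i)) := by
  -- members of P i are nonzero
  have hnz : ∀ i : Fin K, ∀ a ∈ P i, a ≠ 0 := by
    intro i a ha h0
    have := (hP i).2.1 a ha a ha
    simp [h0] at this
  have hmem : ∀ ψ, ψ ∈ (Finset.univ.biUnion fun i : Fin K => (P i).image (tensorBasisVec i)) ↔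
      ∃ i, ∃ a ∈ P i, tensorBasisVec i a = ψ := by
    intro ψ; simp [Finset.mem_biUnion, Finset.mem_image]
  refine ⟨?_, ?_, ?_, ?_⟩
  · -- product form
    intro ψ hψ
    obtain ⟨i, a, ha, rfl⟩ := (hmem ψ).1 hψ
    obtain ⟨φ, rfl⟩ := (hP i).1 a ha
    exact ⟨φ, fun j => if j = i then 1 else 0, by ext p; simp [tensorBasisVec, prodVecExt, prodVec]⟩
  · -- orthonormality
    intro ψ hψ χ hχ
    obtain ⟨i, a, ha, rfl⟩ := (hmem ψ).1 hψ
    obtain ⟨i', b, hb, rfl⟩ := (hmem χ).1 hχ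
    rw [inner_tbv]
    by_cases h : i = i'
    · subst h
      rw [(hP i).2.1 a ha b hb]
      have hiff : tensorBasisVec i a = tensorBasisVec i b ↔ a = b := by
        constructor
        · intro he
          ext x
          have := congrArg (fun v => v (x, i)) he
          simpa [tensorBasisVec] using this
        · rintro rfl; rfl
      by_cases hab : a = b <;> simp [hab, hiff]
    · -- i ≠ i' : vectors distinct and inner 0
      have hne : tensorBasisVec i a ≠ tensorBasisVec i' b := by
        intro he
        have ha0 : a ≠ 0 := hnz i a ha
        obtain ⟨x, hx⟩ : ∃ x, a x ≠ 0 := by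
          by_contra hc
          push_neg at hc
          exact ha0 (by ext x; exact hc x)
        have := congrArg (fun v => v (x, i)) he
        simp [tensorBasisVec, h] at this
        exact hx this
      simp [h, hne]
  · -- cardinality
    have hM : 0 < ∏ i, d i := lt_of_le_of_lt (Nat.zero_le _) (hP ⟨0, lt_of_lt_of_le two_pos hK⟩).2.2.1
    calc (Finset.univ.biUnion fun i : Fin K => (P i).image (tensorBasisVec i)).card
        ≤ ∑ i : Fin K, ((P i).image (tensorBasisVec i)).card := Finset.card_biUnion_le
      _ ≤ ∑ i : Fin K, (P i).card := Finset.sum_le_sum fun i _ => Finset.card_image_le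
      _ < ∑ _i : Fin K, ∏ i, d i := by
          refine Finset.sum_lt_sum_of_nonempty ?_ fun i _ => (hP i).2.2.1
          exact Finset.univ_nonempty_iff.2 ⟨⟨0, lt_of_lt_of_le two_pos hK⟩⟩
      _ = (∏ i, d i) * K := by simp [mul_comm]
  · -- unextendibility
    intro φ χ hne hall
    obtain ⟨p, hp⟩ : ∃ p, prodVecExt φ χ p ≠ 0 := by
      by_contra hc
      push_neg at hc
      exact hne (by ext x; exact hc x)
    have hχ : χ p.2 ≠ 0 := right_ne_zero_of_mul hp
    have hφp : (∏ i, φ i (p.1 i)) ≠ 0 := left_ne_zero_of_mul hp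
    have hφ : prodVec φ ≠ 0 := by
      intro h0
      exact hφp (by simpa [prodVec] using congrArg (fun v => v p.1) h0)
    refine (hP p.2).2.2.2 φ hφ fun a ha => ?_
    have h1 := hall (tensorBasisVec p.2 a) ((hmem _).2 ⟨p.2, a, ha, rfl⟩)
    rw [inner_tbv_ext] at h1
    exact (mul_eq_zero.1 h1).resolve_left hχ
end

section
/- For K ≥ 2, let P⁽¹⁾ be an unextendible product basis of H = ℂ^{d₁} ⊗ ⋯ ⊗ ℂ^{d_N}, and for 2 ≤ i ≤ K let P⁽ⁱ⁾ be a complete orthonormal basis of H consisting of fully product vectors. Then P = {ψ ⊗ e_i : ψ ∈ P⁽ⁱ⁾, 1 ≤ i ≤ K} is an unextendible product basis of H ⊗ ℂ^K, with the same missing number as P⁽¹⁾. -/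
open scoped Classical

/-- A complete orthonormal basis of `ℂ^{d₁} ⊗ ⋯ ⊗ ℂ^{d_N}` consisting of fully
product vectors. -/
def IsCompleteProductBasis {N : ℕ} {d : Fin N → ℕ}
    (S : Finset (EuclideanSpace ℂ (∀ i, Fin (d i)))) : Prop :=
  (∀ ψ ∈ S, ∃ φ, ψ = prodVec φ) ∧
  (∀ ψ ∈ S, ∀ χ ∈ S, (inner ℂ ψ χ : ℂ) = if ψ = χ then 1 else 0) ∧
  S.card = ∏ i, d i

lemma inner_tBV {N K : ℕ} {d : Fin N → ℕ} (i j : Fin K)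
    (ψ χ : EuclideanSpace ℂ (∀ i, Fin (d i))) :
    (inner ℂ (tensorBasisVec i ψ) (tensorBasisVec j χ) : ℂ)
      = (if i = j then 1 else 0) * inner ℂ ψ χ := by
  simp only [tensorBasisVec, PiLp.inner_apply, RCLike.inner_apply]
  rw [Fintype.sum_prod_type_right]
  by_cases h : i = j
  · subst h
    simp [Finset.sum_ite_eq', mul_comm]
  · simp [Finset.sum_ite_eq', h, Ne.symm h]

lemma inner_tBV_ext {N K : ℕ} {d : Fin N → ℕ} (i : Fin K)
    (ψ : EuclideanSpace ℂ (∀ i, Fin (d i))) (φ : ∀ i, Fin (d i) → ℂ) (χ : Fin K → ℂ) :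
    (inner ℂ (tensorBasisVec i ψ) (prodVecExt φ χ) : ℂ)
      = χ i * inner ℂ ψ (prodVec φ) := by
  simp only [tensorBasisVec, prodVecExt, prodVec, PiLp.inner_apply, RCLike.inner_apply]
  rw [Fintype.sum_prod_type_right]
  rw [Finset.sum_comm]
  simp [apply_ite (starRingEnd ℂ), mul_ite, ite_mul, mul_zero, zero_mul,
    Finset.sum_ite_eq', Finset.mul_sum, mul_comm, mul_left_comm]

lemma complete_eq_zero {N : ℕ} {d : Fin N → ℕ}
    (S : Finset (EuclideanSpace ℂ (∀ i, Fin (d i)))) (hS : IsCompleteProductBasis S)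
    (v : EuclideanSpace ℂ (∀ i, Fin (d i)))
    (hv : ∀ ψ ∈ S, (inner ℂ ψ v : ℂ) = 0) : v = 0 := by
  have horth : Orthonormal ℂ (fun x : S => (x : EuclideanSpace ℂ (∀ i, Fin (d i)))) := by
    rw [orthonormal_iff_ite]
    intro a b
    rw [hS.2.1 a a.2 b b.2]
    by_cases h : a = b
    · simp [h]
    · have h' : (a : EuclideanSpace ℂ (∀ i, Fin (d i))) ≠ b := fun e => h (Subtype.ext e)
      simp [h, h']
  have hcard : Fintype.card S = Module.finrank ℂ (EuclideanSpace ℂ (∀ i, Fin (d i))) := by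
    simp [Fintype.card_coe, hS.2.2, finrank_euclideanSpace]
  have hspan := horth.linearIndependent.span_eq_top_of_card_eq_finrank' hcard
  have key : ∀ u : EuclideanSpace ℂ (∀ i, Fin (d i)), (inner ℂ u v : ℂ) = 0 := by
    intro u
    have hu : u ∈ Submodule.span ℂ
        (Set.range (fun x : S => (x : EuclideanSpace ℂ (∀ i, Fin (d i))))) := by
      rw [hspan]; exact Submodule.mem_top
    refine Submodule.span_induction (p := fun x _ => (inner ℂ x v : ℂ) = 0) ?_ ?_ ?_ ?_ hu
    · rintro x ⟨⟨y, hy⟩, rfl⟩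
      exact hv y hy
    · simp
    · intro x y _ _ hx hy
      rw [inner_add_left, hx, hy, add_zero]
    · intro a x _ hx
      rw [inner_smul_left, hx, mul_zero]
  have := key v
  rwa [inner_self_eq_zero] at this

/-- For `K ≥ 2`, if `P 0` is a UPB of `H = ℂ^{d₁} ⊗ ⋯ ⊗ ℂ^{d_N}` and for each
`i ≠ 0` the set `P i` is a complete orthonormal product basis of `H`, then
`{ψ ⊗ e_i : ψ ∈ P i}` is a UPB of `H ⊗ ℂ^K` with the same missing number as
`P 0`. -/
theorem upb_of_upb_and_complete_bases {N K : ℕ} {d : Fin N → ℕ} (hK : 2 ≤ K)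
    (P : Fin K → Finset (EuclideanSpace ℂ (∀ i, Fin (d i))))
    (h0 : IsUPB (P ⟨0, by omega⟩))
    (hrest : ∀ i : Fin K, i ≠ ⟨0, by omega⟩ → IsCompleteProductBasis (P i)) :
    IsUPBExt (Finset.univ.biUnion fun i : Fin K => (P i).image (tensorBasisVec i)) ∧
    (∏ i, d i) * K - (Finset.univ.biUnion fun i : Fin K =>
        (P i).image (tensorBasisVec i)).card = (∏ i, d i) - (P ⟨0, by omega⟩).card := by
  have hKpos : 0 < K := by omega
  set z : Fin K := ⟨0, hKpos⟩ with hz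
  have hprodP : ∀ i : Fin K, ∀ ψ ∈ P i, ∃ φ, ψ = prodVec φ := by
    intro i
    by_cases hi : i = z
    · subst hi; exact h0.1
    · exact (hrest i hi).1
  have horthP : ∀ i : Fin K, ∀ ψ ∈ P i, ∀ χ ∈ P i,
      (inner ℂ ψ χ : ℂ) = if ψ = χ then 1 else 0 := by
    intro i
    by_cases hi : i = z
    · subst hi; exact h0.2.1
    · exact (hrest i hi).2.1
  have hne : ∀ i : Fin K, ∀ ψ ∈ P i, ψ ≠ 0 := by
    intro i ψ hψ h
    have := horthP i ψ hψ ψ hψ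
    simp [h] at this
  have htbv_inj : ∀ i : Fin K, Function.Injective (tensorBasisVec (d := d) i) := by
    intro i ψ χ h
    ext x
    have := congrArg (fun w => w (x, i)) h
    simpa [tensorBasisVec] using this
  have hdisj : ∀ i ∈ Finset.univ, ∀ j ∈ Finset.univ, i ≠ j →
      Disjoint ((P i).image (tensorBasisVec i)) ((P j).image (tensorBasisVec j)) := by
    intro i _ j _ hij
    rw [Finset.disjoint_left]
    rintro v hvi hvj
    obtain ⟨ψ, hψ, rfl⟩ := Finset.mem_image.1 hvi
    obtain ⟨χ, hχ, heq⟩ := Finset.mem_image.1 hvj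
    apply hne i ψ hψ
    ext x
    have := (congrArg (fun w => w (x, i)) heq).symm
    simpa [tensorBasisVec, hij, Ne.symm hij] using this
  have hScard : (Finset.univ.biUnion fun i : Fin K => (P i).image (tensorBasisVec i)).card
      = (P z).card + (K - 1) * (∏ i, d i) := by
    rw [Finset.card_biUnion hdisj]
    have h1 : ∀ i : Fin K, ((P i).image (tensorBasisVec i)).card = (P i).card := by
      intro i
      exact Finset.card_image_of_injective _ (htbv_inj i)
    calc ∑ i : Fin K, ((P i).image (tensorBasisVec i)).card
        = ∑ i : Fin K, (P i).card := Finset.sum_congr rfl (fun i _ => h1 i)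
      _ = (∑ i ∈ Finset.univ.erase z, (P i).card) + (P z).card :=
          (Finset.sum_erase_add _ _ (Finset.mem_univ z)).symm
      _ = (∑ _i ∈ Finset.univ.erase z, ∏ i, d i) + (P z).card := by
          rw [Finset.sum_congr rfl (fun i hi => (hrest i (Finset.mem_erase.1 hi).1).2.2)]
      _ = (P z).card + (K - 1) * (∏ i, d i) := by
          simp [Finset.sum_const, Finset.card_erase_of_mem, Finset.card_univ, add_comm]
  have hDK : (∏ i, d i) * K = (K - 1) * (∏ i, d i) + (∏ i, d i) := by
    rw [Nat.sub_mul, one_mul,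
      Nat.sub_add_cancel (Nat.le_mul_of_pos_left _ (by omega)), mul_comm]
  obtain ⟨A, hA⟩ : ∃ A, (K - 1) * (∏ i, d i) = A := ⟨_, rfl⟩
  rw [hA] at hScard hDK
  have h0card := h0.2.2.1
  refine ⟨⟨?_, ?_, ?_, ?_⟩, ?_⟩
  · rintro v hv
    obtain ⟨i, _, hvi⟩ := Finset.mem_biUnion.1 hv
    obtain ⟨ψ, hψ, rfl⟩ := Finset.mem_image.1 hvi
    obtain ⟨φ, rfl⟩ := hprodP i ψ hψ
    refine ⟨φ, fun k => if k = i then 1 else 0, ?_⟩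
    ext p
    simp [tensorBasisVec, prodVecExt, prodVec]
  · rintro u hu v hv
    obtain ⟨i, _, hui⟩ := Finset.mem_biUnion.1 hu
    obtain ⟨ψ, hψ, rfl⟩ := Finset.mem_image.1 hui
    obtain ⟨j, _, hvj⟩ := Finset.mem_biUnion.1 hv
    obtain ⟨χ, hχ, rfl⟩ := Finset.mem_image.1 hvj
    rw [inner_tBV]
    by_cases hij : i = j
    · subst hij
      rw [horthP i ψ hψ χ hχ]
      by_cases hpc : ψ = χ
      · simp [hpc]
      · have : tensorBasisVec i ψ ≠ tensorBasisVec i χ := fun h => hpc (htbv_inj i h)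
        simp [hpc, this]
    · have hne' : tensorBasisVec i ψ ≠ tensorBasisVec j χ := by
        intro h
        apply hne i ψ hψ
        ext x
        have := congrArg (fun w => w (x, i)) h
        simpa [tensorBasisVec, hij, Ne.symm hij] using this
      simp [hij, hne']
  · rw [hScard, hDK]
    omega
  · intro φ χ hnz hall
    have hφ : prodVec φ ≠ 0 := by
      intro h
      apply hnz
      ext p
      have := congrArg (fun w => w p.1) h
      simp only [prodVec] at this
      simp [prodVecExt, this]
    have hχ : ∃ j, χ j ≠ 0 := by
      by_contra h
      push_neg at h
      apply hnz
      ext p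
      simp [prodVecExt, h]
    obtain ⟨j, hj⟩ := hχ
    have hij : ∀ i : Fin K, ∀ ψ ∈ P i, χ i * (inner ℂ ψ (prodVec φ) : ℂ) = 0 := by
      intro i ψ hψ
      have := hall (tensorBasisVec i ψ)
        (Finset.mem_biUnion.2 ⟨i, Finset.mem_univ i, Finset.mem_image_of_mem _ hψ⟩)
      rwa [inner_tBV_ext] at this
    have hjorth : ∀ ψ ∈ P j, (inner ℂ ψ (prodVec φ) : ℂ) = 0 := by
      intro ψ hψ
      exact (mul_eq_zero.1 (hij j ψ hψ)).resolve_left hj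
    by_cases hj0 : j = z
    · subst hj0
      exact h0.2.2.2 φ hφ hjorth
    · exact hφ (complete_eq_zero _ (hrest j hj0) _ hjorth)
  · rw [hScard, hDK]
    omega
end
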